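/- If f : [a,b] × [c,d] → ℝ is co-ordinated convex, then (1/((b-a)(d-c))) ∫ₐᵇ∫_c^d f(x,y) dy dx ≤ (1/4)[(1/(b-a))∫ₐᵇ f(x,c) dx + (1/(b-a))∫ₐᵇ f(x,d) dx + (1/(d-c))∫_c^d f(a,y) dy + (1/(d-c))∫_c^d f(b,y) dy]. -/

import Mathlib

open Set MeasureTheory

/-- Right half of Hermite–Hadamard for a convex function on `[a, b]`. -/
lemma hh_right_aux {g : ℝ → ℝ} {a b : ℝ} (hab : a < b) (hg : ConvexOn ℝ (Icc a b) g)
    (hgi : IntervalIntegrable g volume a b) :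
    ∫ x in a..b, g x ≤ (b - a) * (g a + g b) / 2 := by
  have hba : (0:ℝ) < b - a := sub_pos.2 hab
  have hmono : ∀ x ∈ Icc a b, g x ≤ ((b - x) * g a + (x - a) * g b) / (b - a) := by
    intro x hx
    have h1 : (0:ℝ) ≤ (b - x)/(b - a) := div_nonneg (by linarith [hx.2]) hba.le
    have h2 : (0:ℝ) ≤ (x - a)/(b - a) := div_nonneg (by linarith [hx.1]) hba.le
    have h3 : (b - x)/(b - a) + (x - a)/(b - a) = 1 := by field_simp; ring
    have := hg.2 (left_mem_Icc.2 hab.le) (right_mem_Icc.2 hab.le) h1 h2 h3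
    simp only [smul_eq_mul] at this
    have hx' : (b - x)/(b - a) * a + (x - a)/(b - a) * b = x := by field_simp; ring
    rw [hx'] at this
    calc g x ≤ (b - x)/(b - a) * g a + (x - a)/(b - a) * g b := this
      _ = ((b - x) * g a + (x - a) * g b) / (b - a) := by ring
  have hR : IntervalIntegrable (fun x => ((b - x) * g a + (x - a) * g b) / (b - a))
      volume a b := by
    apply Continuous.intervalIntegrable
    fun_prop
  have key := intervalIntegral.integral_mono_on hab.le hgi hR hmono
  refine key.trans_eq ?_
  have heq : (fun x => ((b - x) * g a + (x - a) * g b) / (b - a))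
      = fun x => (b * g a - a * g b) / (b - a) + ((g b - g a) / (b - a)) * x := by
    funext x; field_simp; ring
  rw [heq, intervalIntegral.integral_add intervalIntegrable_const
        ((intervalIntegral.intervalIntegrable_id).const_mul _),
      intervalIntegral.integral_const, intervalIntegral.integral_const_mul,
      integral_id, smul_eq_mul]
  field_simp
  ring

theorem hadamard_coordinated_third
    (a b c d : ℝ) (hab : a < b) (hcd : c < d) (f : ℝ → ℝ → ℝ)
    (h1 : ∀ y ∈ Icc c d, ConvexOn ℝ (Icc a b) (fun x => f x y))
    (h2 : ∀ x ∈ Icc a b, ConvexOn ℝ (Icc c d) (fun y => f x y))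
    (hint : IntegrableOn (fun p : ℝ × ℝ => f p.1 p.2) (Icc a b ×ˢ Icc c d))
    (hslice : ∀ x ∈ Icc a b, IntervalIntegrable (fun y => f x y) volume c d)
    (hiter : IntervalIntegrable (fun x => ∫ y in c..d, f x y) volume a b)
    (hbc : IntervalIntegrable (fun x => f x c) volume a b)
    (hbd : IntervalIntegrable (fun x => f x d) volume a b)
    (hba : IntervalIntegrable (fun y => f a y) volume c d)
    (hbb : IntervalIntegrable (fun y => f b y) volume c d) :
    (1/((b-a)*(d-c))) * ∫ x in a..b, ∫ y in c..d, f x y ≤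
      (1/4) * ((1/(b-a)) * ∫ x in a..b, f x c
        + (1/(b-a)) * ∫ x in a..b, f x d
        + (1/(d-c)) * ∫ y in c..d, f a y
        + (1/(d-c)) * ∫ y in c..d, f b y) := by
  have hba' : (0:ℝ) < b - a := sub_pos.2 hab
  have hdc' : (0:ℝ) < d - c := sub_pos.2 hcd
  set μ : Measure ℝ := volume.restrict (Ioc a b) with hμ
  set ν : Measure ℝ := volume.restrict (Ioc c d) with hν
  -- product integrability w.r.t. restricted measures
  have hprod : Integrable (fun p : ℝ × ℝ => f p.1 p.2) (μ.prod ν) := by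
    rw [hμ, hν, Measure.prod_restrict, ← Measure.volume_eq_prod]
    exact hint.mono_set (prod_mono Ioc_subset_Icc_self Ioc_subset_Icc_self)
  -- Step 1 : bound the iterated integral using convexity in y
  have hR1 : IntervalIntegrable (fun x => (d - c) * (f x c + f x d) / 2) volume a b :=
    ((hbc.add hbd).const_mul (d - c)).div_const 2
  have S1 : (∫ x in a..b, ∫ y in c..d, f x y)
      ≤ ∫ x in a..b, (d - c) * (f x c + f x d) / 2 := by
    refine intervalIntegral.integral_mono_on hab.le hiter hR1 ?_
    intro x hx
    exact hh_right_aux hcd (h2 x hx) (hslice x hx)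
  have S1' : (∫ x in a..b, ∫ y in c..d, f x y)
      ≤ (d - c) * ((∫ x in a..b, f x c) + ∫ x in a..b, f x d) / 2 := by
    refine S1.trans_eq ?_
    rw [intervalIntegral.integral_div, intervalIntegral.integral_const_mul,
      intervalIntegral.integral_add hbc hbd]
  -- Fubini: swap the order of integration
  have hswap : (∫ x in a..b, ∫ y in c..d, f x y) = ∫ y, ∫ x, f x y ∂μ ∂ν := by
    rw [intervalIntegral.integral_of_le hab.le]
    simp only [intervalIntegral.integral_of_le hcd.le]
    exact MeasureTheory.integral_integral_swap hprod
  -- Step 2 : bound the swapped iterated integral using convexity in x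
  have hInt2 : Integrable (fun y => ∫ x, f x y ∂μ) ν := by
    have := hprod.integral_prod_right
    simpa using this
  have hR2 : Integrable (fun y => (b - a) * (f a y + f b y) / 2) ν :=
    ((hba.1.add hbb.1).const_mul (b - a)).div_const 2
  have hae : ∀ᵐ y ∂ν, Integrable (fun x => f x y) μ := by
    have := hprod.prod_left_ae
    simpa using this
  have S2 : (∫ y, ∫ x, f x y ∂μ ∂ν) ≤ ∫ y, (b - a) * (f a y + f b y) / 2 ∂ν := by
    refine integral_mono_ae hInt2 hR2 ?_
    filter_upwards [hae, ae_restrict_mem measurableSet_Ioc] with y hy hymem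
    have hyI : y ∈ Icc c d := Ioc_subset_Icc_self hymem
    have hii : IntervalIntegrable (fun x => f x y) volume a b :=
      (intervalIntegrable_iff_integrableOn_Ioc_of_le hab.le).2 hy
    have := hh_right_aux hab (h1 y hyI) hii
    rwa [intervalIntegral.integral_of_le hab.le] at this
  have S2' : (∫ x in a..b, ∫ y in c..d, f x y)
      ≤ (b - a) * ((∫ y in c..d, f a y) + ∫ y in c..d, f b y) / 2 := by
    rw [hswap]
    refine S2.trans_eq ?_
    have : (∫ y, (b - a) * (f a y + f b y) / 2 ∂ν)
        = ∫ y in c..d, (b - a) * (f a y + f b y) / 2 := by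
      rw [intervalIntegral.integral_of_le hcd.le]
    rw [this, intervalIntegral.integral_div, intervalIntegral.integral_const_mul,
      intervalIntegral.integral_add hba hbb]
  -- The statement's RHS parses with nested integrals; unfold via linearity.
  have key : ∀ (g : ℝ → ℝ) (u v C : ℝ), IntervalIntegrable g volume u v →
      (∫ t in u..v, g t + C) = (∫ t in u..v, g t) + (v - u) * C := by
    intro g u v C hg
    rw [intervalIntegral.integral_add hg intervalIntegrable_const,
      intervalIntegral.integral_const, smul_eq_mul]
  rw [key (fun y => f a y) c d _ hba, key (fun x => f x d) a b _ hbd,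
    key (fun x => f x c) a b _ hbc]
  set I := ∫ x in a..b, ∫ y in c..d, f x y with hI
  set Ic := (∫ x in a..b, f x c) with hIc
  set Id := (∫ x in a..b, f x d) with hId
  set Ia := (∫ y in c..d, f a y) with hIa
  set Ib := (∫ y in c..d, f b y) with hIb
  have hP : (0:ℝ) < (b - a) * (d - c) := mul_pos hba' hdc'
  rw [one_div, inv_mul_le_iff₀ hP]
  have e2 : (b - a) * (d - c) *
      (1 / 4 * (1 / (b - a) * (Ic + (b - a) * (1 / (b - a) *
        (Id + (b - a) * (1 / (d - c) * (Ia + (d - c) * (1 / (d - c) * Ib))))))))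
      = (1/4) * ((d - c) * (Ic + Id) + (b - a) * (Ia + Ib)) := by
    field_simp
    ring
  rw [e2]
  linarith [S1', S2']
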